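/- (Hex Theorem of Gale) For any discrete box K of dimension n and any cover F of K with |F| ≤ n, some member of F connects two opposite faces of K. -/

import Mathlib

def adj {n : ℕ} {k : Fin n → ℕ} (x y : ∀ i, Fin (k i)) : Prop :=
  ∀ i, |(x i : ℤ) - (y i : ℤ)| ≤ 1

/-- A subset `F` of the discrete box connects two opposite faces: for some
coordinate `i` there is a chain in `F` with consecutive distances `≤ 1`
from the face `x i = 0` to the face `x i = k i - 1`. -/
def Connects {n : ℕ} {k : Fin n → ℕ} (F : Set (∀ i, Fin (k i))) : Prop :=
  ∃ i : Fin n, ∃ m : ℕ, ∃ c : Fin (m + 1) → ∀ j, Fin (k j),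
    (∀ j, c j ∈ F) ∧ (c 0 i : ℕ) = 0 ∧ (c (Fin.last m) i : ℕ) = k i - 1 ∧
    ∀ j : Fin m, adj (c j.castSucc) (c j.succ)

namespace GaleHexProof

open Finset
open scoped Classical

variable {n : ℕ} {k : Fin n → ℕ}

@[reducible] def Pt (k : Fin n → ℕ) := ∀ i, Fin (k i)

/-- the `t`-th vertex of a chain (clamped at the end). -/
def vat {p : ℕ} (v : Fin (p + 1) → Pt k) (t : ℕ) : Pt k := v ⟨min t p, by omega⟩

/-- `d`-coordinate (as `ℕ`) of the `t`-th vertex. -/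
def vc {p : ℕ} (v : Fin (p + 1) → Pt k) (t : ℕ) (d : Fin n) : ℕ := (vat v t d : ℕ)

/-- `v` is a Kuhn chain: each step adds `1` to exactly one coordinate, every
coordinate increases by at most `1` in total, and coordinates that never
increase are `0`. -/
def IsChain {p : ℕ} (v : Fin (p + 1) → Pt k) : Prop :=
  (∀ t, t < p → ∃ d : Fin n,
      vc v (t + 1) d = vc v t d + 1 ∧ ∀ e : Fin n, e ≠ d → vc v (t + 1) e = vc v t e) ∧
  (∀ d, vc v p d ≤ vc v 0 d + 1) ∧
  (∀ d, vc v p d = vc v 0 d → vc v 0 d = 0)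

def used {p : ℕ} (v : Fin (p + 1) → Pt k) (d : Fin n) : Prop :=
  vc v p d = vc v 0 d + 1

lemma vat_clamp {p : ℕ} (v : Fin (p + 1) → Pt k) {t : ℕ} (h : p ≤ t) :
    vat v t = vat v p := by
  unfold vat
  exact congrArg v (Fin.ext (by simp only []; rw [Nat.min_eq_right h, Nat.min_self]))

lemma vc_clamp {p : ℕ} (v : Fin (p + 1) → Pt k) {t : ℕ} (h : p ≤ t) (d : Fin n) :
    vc v t d = vc v p d := by
  unfold vc
  rw [vat_clamp v h]

lemma vc_succ {p : ℕ} {v : Fin (p + 1) → Pt k} (hv : IsChain v) (t : ℕ) (d : Fin n) :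
    vc v (t + 1) d = vc v t d ∨ vc v (t + 1) d = vc v t d + 1 := by
  rcases lt_or_ge t p with ht | ht
  · obtain ⟨d0, h1, h2⟩ := hv.1 t ht
    by_cases hd : d = d0
    · subst hd; right; exact h1
    · left; exact h2 d hd
  · left; rw [vc_clamp v ht, vc_clamp v (by omega)]

lemma vc_mono {p : ℕ} {v : Fin (p + 1) → Pt k} (hv : IsChain v) {t s : ℕ} (h : t ≤ s)
    (d : Fin n) : vc v t d ≤ vc v s d := by
  induction s, h using Nat.le_induction with
  | base => exact le_rfl
  | succ s hs ih => rcases vc_succ hv s d with h' | h' <;> omega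

lemma vc_le_last {p : ℕ} {v : Fin (p + 1) → Pt k} (hv : IsChain v) (t : ℕ) (d : Fin n) :
    vc v t d ≤ vc v p d := by
  rcases le_or_gt t p with h | h
  · exact vc_mono hv h d
  · rw [vc_clamp v h.le]

lemma vc_between {p : ℕ} {v : Fin (p + 1) → Pt k} (hv : IsChain v) (t : ℕ) (d : Fin n) :
    vc v 0 d ≤ vc v t d ∧ vc v t d ≤ vc v 0 d + 1 :=
  ⟨vc_mono hv (Nat.zero_le t) d, le_trans (vc_le_last hv t d) (hv.2.1 d)⟩

lemma chain_adj {p : ℕ} {v : Fin (p + 1) → Pt k} (hv : IsChain v) (t s : ℕ) :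
    adj (vat v t) (vat v s) := by
  intro d
  have h1 := vc_between hv t d
  have h2 := vc_between hv s d
  rw [abs_le]
  unfold vc at h1 h2
  omega

lemma used_card {p : ℕ} {v : Fin (p + 1) → Pt k} (hv : IsChain v) :
    (univ.filter fun d : Fin n => used v d).card = p := by
  choose f hf1 hf2 using hv.1
  have hg : ∀ (t : ℕ) (ht : t < p) (e : Fin n),
      vc v (t + 1) e = vc v t e + 1 → e = f t ht := by
    intro t ht e he
    by_contra hne
    have := hf2 t ht e hne
    omega
  have hinj : ∀ (t s : ℕ) (ht : t < p) (hs : s < p), f t ht = f s hs → t = s := by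
    intro t s ht hs hfe
    by_contra hne
    -- wlog t < s
    rcases Nat.lt_or_ge t s with hlt | hge
    · have h1 := hf1 t ht
      have h2 := hf1 s hs
      rw [hfe] at h1
      set d := f s hs
      have hm1 : vc v (t + 1) d ≤ vc v s d := vc_mono hv (by omega) d
      have hm0 : vc v 0 d ≤ vc v t d := vc_mono hv (by omega) d
      have hl : vc v (s + 1) d ≤ vc v 0 d + 1 :=
        le_trans (vc_le_last hv (s + 1) d) (hv.2.1 d)
      omega
    · have hlt : s < t := by omega
      have h1 := hf1 s hs
      have h2 := hf1 t ht
      rw [hfe] at h2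
      set d := f s hs
      have hm1 : vc v (s + 1) d ≤ vc v t d := vc_mono hv (by omega) d
      have hm0 : vc v 0 d ≤ vc v s d := vc_mono hv (by omega) d
      have hl : vc v (t + 1) d ≤ vc v 0 d + 1 :=
        le_trans (vc_le_last hv (t + 1) d) (hv.2.1 d)
      omega
  -- used = image of step directions
  have himg : (univ.filter fun d : Fin n => used v d) =
      univ.image (fun t : Fin p => f t t.2) := by
    ext d
    simp only [mem_filter, mem_univ, true_and, mem_image]
    constructor
    · intro hd
      -- find the step where d increments
      have key : ∀ s, s ≤ p → vc v s d = vc v 0 d + 1 → ∃ t : Fin p, f t t.2 = d := by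
        intro s
        induction s with
        | zero => intro _ h; omega
        | succ s ih =>
          intro hs h
          by_cases h' : vc v s d = vc v 0 d + 1
          · exact ih (by omega) h'
          · have hb := vc_between hv s d
            have : vc v (s + 1) d = vc v s d + 1 := by omega
            have hsd : s < p := by omega
            exact ⟨⟨s, hsd⟩, (hg s hsd d this).symm⟩
      exact key p le_rfl hd
    · rintro ⟨t, rfl⟩
      have h1 := hf1 t t.2
      have hm : vc v (t + 1) (f t t.2) ≤ vc v p (f t t.2) := vc_le_last hv _ _
      have hm0 : vc v 0 (f t t.2) ≤ vc v t (f t t.2) := vc_mono hv (by omega) _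
      have hl := hv.2.1 (f t t.2)
      unfold used
      omega
  rw [himg, card_image_of_injective _ (fun t s hts => Fin.ext (hinj t s t.2 s.2 hts)),
    card_univ, Fintype.card_fin]


section Comb

variable {ι' : Type*}

/-- The key parity fact: for `f : Fin (p+1) → ι'` and a target set `S` of size
`p`, the number of indices `j` such that `f` restricted away from `j` is
injective and covers `S` is odd iff `f` is injective and covers `S`. -/
lemma comb {p : ℕ} (S : Finset ι') (hS : S.card = p) (f : Fin (p + 1) → ι')
    (G : Finset (Fin (p + 1)))
    (hG : ∀ j, j ∈ G ↔ ((∀ a b : Fin (p + 1), a ≠ j → b ≠ j → f a = f b → a = b) ∧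
        ∀ d ∈ S, ∃ a : Fin (p + 1), a ≠ j ∧ f a = d)) :
    Odd G.card ↔ (Function.Injective f ∧ ∀ d ∈ S, ∃ a : Fin (p + 1), f a = d) := by
  classical
  by_cases hinj : Function.Injective f
  · by_cases hcov : ∀ d ∈ S, ∃ a : Fin (p + 1), f a = d
    · -- there is a unique index whose value is outside S
      have himg : S ⊆ univ.image f := by
        intro d hd
        obtain ⟨a, ha⟩ := hcov d hd
        exact mem_image.2 ⟨a, mem_univ a, ha⟩
      have hcardimg : (univ.image f).card = p + 1 := by
        rw [card_image_of_injective _ hinj, card_univ, Fintype.card_fin]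
      have hex : ∃ j : Fin (p + 1), f j ∉ S := by
        by_contra h
        push_neg at h
        have : univ.image f ⊆ S := by
          intro d hd
          obtain ⟨a, _, rfl⟩ := mem_image.1 hd
          exact h a
        have := card_le_card this
        omega
      obtain ⟨j0, hj0⟩ := hex
      have huniq : ∀ j : Fin (p + 1), f j ∉ S → j = j0 := by
        intro j hj
        by_contra hne
        have hsub : insert (f j) (insert (f j0) S) ⊆ univ.image f := by
          intro d hd
          rcases mem_insert.1 hd with rfl | hd
          · exact mem_image.2 ⟨j, mem_univ _, rfl⟩
          rcases mem_insert.1 hd with rfl | hd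
          · exact mem_image.2 ⟨j0, mem_univ _, rfl⟩
          · exact himg hd
        have hc1 : (insert (f j0) S).card = p + 1 := by
          rw [card_insert_of_notMem hj0, hS]
        have hfne : f j ∉ insert (f j0) S := by
          simp only [mem_insert]
          push_neg
          exact ⟨fun h => hne (hinj h), hj⟩
        have hc2 : (insert (f j) (insert (f j0) S)).card = p + 2 := by
          rw [card_insert_of_notMem hfne, hc1]
        have := card_le_card hsub
        omega
      have hfilter : G = {j0} := by
        ext j
        rw [hG j, mem_singleton]
        constructor
        · intro hgj
          apply huniq
          intro hfj
          obtain ⟨a, ha, hfa⟩ := hgj.2 (f j) hfj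
          exact ha (hinj hfa)
        · rintro rfl
          refine ⟨fun a b _ _ h => hinj h, fun d hd => ?_⟩
          obtain ⟨a, ha⟩ := hcov d hd
          refine ⟨a, fun h => ?_, ha⟩
          subst h
          rw [ha] at hj0
          exact hj0 hd
      rw [hfilter, card_singleton]
      exact iff_of_true odd_one ⟨hinj, hcov⟩
    · have hfilter : G = ∅ := by
        ext j
        rw [hG j]
        simp only [notMem_empty, iff_false]
        intro hgj
        push_neg at hcov
        obtain ⟨d, hd, hnd⟩ := hcov
        obtain ⟨a, _, hfa⟩ := hgj.2 d hd
        exact hnd a hfa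
      rw [hfilter]
      simp [hcov]
  · -- f not injective: the good set is empty or a pair
    have hrhs : ¬(Function.Injective f ∧ ∀ d ∈ S, ∃ a : Fin (p + 1), f a = d) :=
      fun h => hinj h.1
    simp only [hrhs, iff_false]
    rcases G.eq_empty_or_nonempty with he | hne
    · rw [he]
      simp
    obtain ⟨j, hj⟩ := hne
    have hgj := (hG j).1 hj
    obtain ⟨x, y, hfxy, hxy⟩ : ∃ x y, f x = f y ∧ x ≠ y := by
      by_contra h
      push_neg at h
      exact hinj fun a b hab => h a b hab
    have hjxy : j = x ∨ j = y := by
      by_contra h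
      push_neg at h
      exact hxy (hgj.1 x y (fun hh => h.1 hh.symm) (fun hh => h.2 hh.symm) hfxy)
    obtain ⟨b, hbj, hfb⟩ : ∃ b, b ≠ j ∧ f b = f j := by
      rcases hjxy with rfl | rfl
      · exact ⟨y, fun h => hxy h.symm, hfxy.symm⟩
      · exact ⟨x, hxy, hfxy⟩
    have hbuniq : ∀ c, c ≠ j → f c = f j → c = b := by
      intro c hc hfc
      exact hgj.1 c b hc hbj (by rw [hfc, hfb])
    have hgb : (∀ a b' : Fin (p + 1), a ≠ b → b' ≠ b → f a = f b' → a = b') ∧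
        ∀ d ∈ S, ∃ a : Fin (p + 1), a ≠ b ∧ f a = d := by
      constructor
      · intro a1 a2 h1 h2 hf12
        by_cases e1 : a1 = j
        · by_cases e2 : a2 = j
          · rw [e1, e2]
          · exact absurd (hbuniq a2 e2 (by rw [← hf12, e1])) h2
        · by_cases e2 : a2 = j
          · exact absurd (hbuniq a1 e1 (by rw [hf12, e2])) h1
          · exact hgj.1 a1 a2 e1 e2 hf12
      · intro d hd
        obtain ⟨a, ha, hfa⟩ := hgj.2 d hd
        by_cases hab : a = b
        · subst hab
          exact ⟨j, fun h => hbj h.symm, by rw [← hfb, hfa]⟩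
        · exact ⟨a, hab, hfa⟩
    have hfilter : G = {j, b} := by
      ext c
      rw [hG c, mem_insert, mem_singleton]
      constructor
      · intro hgc
        by_contra h
        push_neg at h
        exact hbj (hgc.1 j b (fun hh => h.1 hh.symm) (fun hh => h.2 hh.symm) hfb.symm).symm
      · rintro (rfl | rfl)
        · exact hgj
        · exact hgb
    rw [hfilter, card_insert_of_notMem (by simpa using fun h => hbj h.symm), card_singleton]
    decide

end Comb


lemma vat_eq {p : ℕ} (v : Fin (p + 1) → Pt k) (a : Fin (p + 1)) : vat v (a : ℕ) = v a :=
  congrArg v (Fin.ext (by simp only []; exact Nat.min_eq_left (by omega)))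

lemma natcast_zmod2 (c : ℕ) : (c : ZMod 2) = if Odd c then 1 else 0 := by
  rw [← ZMod.natCast_mod]
  rcases Nat.mod_two_eq_zero_or_one c with h | h <;>
    rw [h] <;> simp [Nat.odd_iff, h]

section Surgery

/-- appended point when dropping vertex 0. -/
def wApp {p : ℕ} (v : Fin (p + 2) → Pt k) : Pt k := fun d =>
  ⟨min (vc v (p + 1) d + vc v 1 d - vc v 0 d) (k d - 1), by
    have := (v 0 d).isLt
    exact Nat.lt_of_le_of_lt (Nat.min_le_right _ _) (by omega)⟩

def appChain {p : ℕ} (v : Fin (p + 2) → Pt k) : Fin (p + 2) → Pt k := fun t =>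
  if (t : ℕ) = p + 1 then wApp v else vat v ((t : ℕ) + 1)

/-- prepended point when dropping the last vertex. -/
def wPre {p : ℕ} (v : Fin (p + 2) → Pt k) : Pt k := fun d =>
  ⟨vc v 0 d - (vc v (p + 1) d - vc v p d), by
    have h1 := (v 0 d).isLt
    have : vc v 0 d = (v 0 d : ℕ) := by
      unfold vc vat
      congr 1
    omega⟩

def preChain {p : ℕ} (v : Fin (p + 2) → Pt k) : Fin (p + 2) → Pt k := fun t =>
  if (t : ℕ) = 0 then wPre v else vat v ((t : ℕ) - 1)

/-- replaced middle vertex when dropping an interior vertex `j`. -/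
def wMid {p : ℕ} (v : Fin (p + 2) → Pt k) (j : ℕ) : Pt k := fun d =>
  ⟨min (vc v (j - 1) d + vc v (j + 1) d - vc v j d) (k d - 1), by
    have := (v 0 d).isLt
    exact Nat.lt_of_le_of_lt (Nat.min_le_right _ _) (by omega)⟩

def midChain {p : ℕ} (v : Fin (p + 2) → Pt k) (j : ℕ) : Fin (p + 2) → Pt k := fun t =>
  if (t : ℕ) = j then wMid v j else v t

def BCond {p : ℕ} (v : Fin (p + 2) → Pt k) : Prop :=
  ∀ d : Fin n, vc v (p + 1) d = vc v p d + 1 → vc v 0 d = 0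

noncomputable def phi {p : ℕ} (q : (Fin (p + 2) → Pt k) × Fin (p + 2)) :
    (Fin (p + 2) → Pt k) × Fin (p + 2) :=
  if (q.2 : ℕ) = 0 then (appChain q.1, Fin.last (p + 1))
  else if (q.2 : ℕ) = p + 1 then
    if BCond q.1 then q else (preChain q.1, 0)
  else (midChain q.1 (q.2 : ℕ), q.2)

lemma vat_appChain {p : ℕ} (v : Fin (p + 2) → Pt k) {t : ℕ} (ht : t ≤ p) :
    vat (appChain v) t = vat v (t + 1) := by
  have hm : min t (p + 1) = t := Nat.min_eq_left (by omega)
  show appChain v ⟨min t (p + 1), by omega⟩ = vat v (t + 1)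
  unfold appChain
  simp only [hm]
  rw [if_neg (by omega)]

lemma vat_appChain_last {p : ℕ} (v : Fin (p + 2) → Pt k) {t : ℕ} (ht : t = p + 1) :
    vat (appChain v) t = wApp v := by
  subst ht
  have hm : min (p + 1) (p + 1) = p + 1 := Nat.min_self _
  show appChain v ⟨min (p + 1) (p + 1), by omega⟩ = wApp v
  unfold appChain
  simp only [hm, if_true]

lemma vat_preChain {p : ℕ} (v : Fin (p + 2) → Pt k) {t : ℕ} (ht : 1 ≤ t) (ht2 : t ≤ p + 1) :
    vat (preChain v) t = vat v (t - 1) := by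
  have hm : min t (p + 1) = t := Nat.min_eq_left (by omega)
  show preChain v ⟨min t (p + 1), by omega⟩ = vat v (t - 1)
  unfold preChain
  simp only [hm]
  rw [if_neg (by omega)]

lemma vat_preChain_zero {p : ℕ} (v : Fin (p + 2) → Pt k) :
    vat (preChain v) 0 = wPre v := by
  have hm : min 0 (p + 1) = 0 := Nat.min_eq_left (by omega)
  show preChain v ⟨min 0 (p + 1), by omega⟩ = wPre v
  unfold preChain
  simp only [hm, if_true]

lemma vat_midChain {p : ℕ} (v : Fin (p + 2) → Pt k) {j t : ℕ} (ht : t ≠ j) (ht2 : t ≤ p + 1) :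
    vat (midChain v j) t = vat v t := by
  have hm : min t (p + 1) = t := Nat.min_eq_left (by omega)
  show midChain v j ⟨min t (p + 1), by omega⟩ = vat v t
  unfold midChain
  simp only [hm]
  rw [if_neg (by omega)]
  unfold vat
  exact congrArg v (Fin.ext (by simp only []; omega))

lemma vat_midChain_self {p : ℕ} (v : Fin (p + 2) → Pt k) {j : ℕ} (hj : j ≤ p + 1) :
    vat (midChain v j) j = wMid v j := by
  have hm : min j (p + 1) = j := Nat.min_eq_left (by omega)
  show midChain v j ⟨min j (p + 1), by omega⟩ = wMid v j
  unfold midChain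
  simp only [hm, if_true]

end Surgery

section Label

variable (ℓ : Pt k → Fin n × Bool)

/-- Dropping vertex `j` from the chain `v` leaves vertices whose labels have
sign `false`, pairwise distinct directions, covering all used directions. -/
def GoodDrop {p : ℕ} (v : Fin (p + 2) → Pt k) (j : ℕ) : Prop :=
  (∀ t, t ≤ p + 1 → t ≠ j → (ℓ (vat v t)).2 = false) ∧
  (∀ t s, t ≤ p + 1 → s ≤ p + 1 → t ≠ j → s ≠ j →
    (ℓ (vat v t)).1 = (ℓ (vat v s)).1 → t = s) ∧
  (∀ d : Fin n, used v d → ∃ t, t ≤ p + 1 ∧ t ≠ j ∧ (ℓ (vat v t)).1 = d)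

/-- A fully positive chain. -/
def PsiObj {p : ℕ} (v : Fin (p + 1) → Pt k) : Prop :=
  (∀ t, t ≤ p → (ℓ (vat v t)).2 = false) ∧
  (∀ t s, t ≤ p → s ≤ p → (ℓ (vat v t)).1 = (ℓ (vat v s)).1 → t = s) ∧
  (∀ d : Fin n, used v d → ∃ t, t ≤ p ∧ (ℓ (vat v t)).1 = d)

noncomputable def psiCount (p : ℕ) : ℕ :=
  (univ.filter fun v : Fin (p + 1) → Pt k => IsChain v ∧ PsiObj ℓ v).card

variable (hbot : ∀ (x : Pt k) (i : Fin n), (x i : ℕ) = 0 → ℓ x ≠ (i, true))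
variable (htop : ∀ (x : Pt k) (i : Fin n), (x i : ℕ) = k i - 1 → ℓ x ≠ (i, false))
variable (hcomp : ∀ (x y : Pt k) (i : Fin n),
    adj x y → ℓ x = (i, false) → ℓ y = (i, true) → False)

include hbot hcomp in
lemma room_parity {p : ℕ} {v : Fin (p + 2) → Pt k} (hv : IsChain v) :
    Odd ((univ.filter fun j : Fin (p + 2) => GoodDrop ℓ v (j : ℕ)).card) ↔ PsiObj ℓ v := by
  by_cases hsg : ∀ t, t ≤ p + 1 → (ℓ (vat v t)).2 = false
  · have hS : (univ.filter fun d : Fin n => used v d).card = p + 1 := used_card hv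
    refine (comb (univ.filter fun d : Fin n => used v d) hS
      (fun a : Fin (p + 2) => (ℓ (vat v (a : ℕ))).1)
      (univ.filter fun j : Fin (p + 2) => GoodDrop ℓ v (j : ℕ)) ?_).trans ?_
    · intro j
      simp only [mem_filter, mem_univ, true_and]
      constructor
      · rintro ⟨_, h2, h3⟩
        constructor
        · intro a b ha hb hab
          exact Fin.ext (h2 (a : ℕ) (b : ℕ) (by omega) (by omega)
            (fun h => ha (Fin.ext h)) (fun h => hb (Fin.ext h)) hab)
        · intro d hd
          obtain ⟨t, ht1, ht2, ht3⟩ := h3 d hd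
          exact ⟨⟨t, by omega⟩, fun h => ht2 (congrArg Fin.val h), ht3⟩
      · rintro ⟨h2, h3⟩
        refine ⟨fun t ht _ => hsg t ht, ?_, ?_⟩
        · intro t s ht hs htj hsj hts
          have := h2 ⟨t, by omega⟩ ⟨s, by omega⟩
            (fun h => htj (congrArg Fin.val h)) (fun h => hsj (congrArg Fin.val h)) hts
          exact congrArg Fin.val this
        · intro d hd
          obtain ⟨a, ha, hfa⟩ := h3 d hd
          exact ⟨(a : ℕ), by omega, fun h => ha (Fin.ext h), hfa⟩
    · unfold PsiObj
      constructor
      · rintro ⟨h1, h2⟩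
        refine ⟨fun t ht => hsg t ht, ?_, ?_⟩
        · intro t s ht hs hts
          have := h1 (a₁ := ⟨t, by omega⟩) (a₂ := ⟨s, by omega⟩) hts
          exact congrArg Fin.val this
        · intro d hd
          obtain ⟨a, hfa⟩ := h2 d (mem_filter.2 ⟨mem_univ d, hd⟩)
          exact ⟨(a : ℕ), by omega, hfa⟩
      · rintro ⟨_, h1, h2⟩
        constructor
        · intro a b hab
          exact Fin.ext (h1 (a : ℕ) (b : ℕ) (by omega) (by omega) hab)
        · intro d hd
          obtain ⟨t, ht, htd⟩ := h2 d (mem_filter.1 hd).2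
          exact ⟨⟨t, by omega⟩, htd⟩
  · push_neg at hsg
    obtain ⟨t0, ht0, hs0⟩ := hsg
    rw [ne_eq, Bool.not_eq_false] at hs0
    set dd := (ℓ (vat v t0)).1 with hdd
    have hlv : ℓ (vat v t0) = (dd, true) := by
      rw [Prod.ext_iff]
      exact ⟨rfl, hs0⟩
    have hng : ∀ j : Fin (p + 2), ¬ GoodDrop ℓ v (j : ℕ) := by
      intro j hgj
      have haj : t0 = (j : ℕ) := by
        by_contra h
        rw [hgj.1 t0 ht0 h] at hs0
        exact Bool.false_ne_true hs0
      by_cases hu : used v dd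
      · obtain ⟨t, ht, htj, htd⟩ := hgj.2.2 dd hu
        have hla : ℓ (vat v t) = (dd, false) := by
          rw [Prod.ext_iff]
          exact ⟨htd, hgj.1 t ht (by omega)⟩
        exact hcomp (vat v t) (vat v t0) dd (chain_adj hv t t0) hla hlv
      · have h1 : vc v (p + 1) dd ≤ vc v 0 dd + 1 := hv.2.1 dd
        have h2 : vc v 0 dd ≤ vc v (p + 1) dd := vc_mono hv (by omega) dd
        have h3 : vc v (p + 1) dd = vc v 0 dd := by
          unfold used at hu
          omega
        have h4 : vc v 0 dd = 0 := hv.2.2 dd h3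
        have h5 : vc v t0 dd ≤ vc v (p + 1) dd := vc_le_last hv _ _
        have h6 : vc v 0 dd ≤ vc v t0 dd := vc_mono hv (by omega) dd
        refine hbot (vat v t0) dd ?_ hlv
        show vc v t0 dd = 0
        omega
    have he : (univ.filter fun j : Fin (p + 2) => GoodDrop ℓ v (j : ℕ)) = ∅ := by
      ext j
      simp [hng j]
    rw [he]
    simp only [card_empty]
    constructor
    · intro h
      exact absurd h (by decide)
    · intro hp
      rw [hp.1 t0 ht0] at hs0
      exact absurd hs0 Bool.false_ne_true

include hbot hcomp in
lemma step1 {p : ℕ} :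
    (((univ.filter fun q : (Fin (p + 2) → Pt k) × Fin (p + 2) =>
        IsChain q.1 ∧ GoodDrop ℓ q.1 (q.2 : ℕ)).card : ℕ) : ZMod 2) =
      (psiCount ℓ (p + 1) : ZMod 2) := by
  set I := univ.filter fun q : (Fin (p + 2) → Pt k) × Fin (p + 2) =>
      IsChain q.1 ∧ GoodDrop ℓ q.1 (q.2 : ℕ) with hI
  have hfib : I.card = ∑ v ∈ univ.filter fun v : Fin (p + 2) → Pt k => IsChain v,
      (univ.filter fun j : Fin (p + 2) => GoodDrop ℓ v (j : ℕ)).card := by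
    rw [card_eq_sum_card_fiberwise (f := Prod.fst)
      (t := univ.filter fun v : Fin (p + 2) → Pt k => IsChain v)]
    · apply sum_congr rfl
      intro v hv
      simp only [mem_filter, mem_univ, true_and] at hv
      apply card_bij (i := fun q _ => q.2)
      · intro q hq
        simp only [hI, mem_filter, mem_univ, true_and] at hq ⊢
        obtain ⟨⟨_, hg⟩, rfl⟩ := hq
        exact hg
      · intro q hq q' hq' hqq
        simp only [hI, mem_filter] at hq hq'
        exact Prod.ext (hq.2.trans hq'.2.symm) hqq
      · intro j hj
        simp only [mem_filter, mem_univ, true_and] at hj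
        refine ⟨(v, j), ?_, rfl⟩
        simp only [hI, mem_filter, mem_univ, true_and]
        exact ⟨⟨hv, hj⟩, by trivial⟩
    · intro q hq
      simp only [hI, coe_filter, Set.mem_setOf_eq, mem_filter, mem_univ, true_and] at hq ⊢
      exact hq.1
  rw [hfib, Nat.cast_sum]
  have : ∀ v ∈ univ.filter fun v : Fin (p + 2) → Pt k => IsChain v,
      (((univ.filter fun j : Fin (p + 2) => GoodDrop ℓ v (j : ℕ)).card : ℕ) : ZMod 2) =
        if PsiObj ℓ v then 1 else 0 := by
    intro v hv
    simp only [mem_filter, mem_univ, true_and] at hv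
    rw [natcast_zmod2]
    by_cases hps : PsiObj ℓ v
    · rw [if_pos ((room_parity ℓ hbot hcomp hv).2 hps), if_pos hps]
    · rw [if_neg (fun h => hps ((room_parity ℓ hbot hcomp hv).1 h)), if_neg hps]
  rw [sum_congr rfl this, sum_boole]
  unfold psiCount
  norm_cast
  rw [filter_filter]

include htop in
lemma case_zero {p : ℕ} {v : Fin (p + 2) → Pt k} (hv : IsChain v)
    (hg : GoodDrop ℓ v 0) :
    IsChain (appChain v) ∧ GoodDrop ℓ (appChain v) (p + 1) ∧
      ¬ BCond (appChain v) ∧ preChain (appChain v) = v := by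
  obtain ⟨d0, hd0a0, hd0b0⟩ := hv.1 0 (by omega)
  have hd0a : vc v 1 d0 = vc v 0 d0 + 1 := hd0a0
  have hd0b : ∀ e : Fin n, e ≠ d0 → vc v 1 e = vc v 0 e := hd0b0
  clear hd0a0 hd0b0
  have hused0' : vc v (p + 1) d0 = vc v 0 d0 + 1 := by
    have h1 : vc v 1 d0 ≤ vc v (p + 1) d0 := vc_mono hv (by omega) d0
    have h2 := hv.2.1 d0
    have h3 : vc v 0 d0 ≤ vc v 1 d0 := vc_mono hv (by omega) d0
    omega
  have hbound : vc v 0 d0 + 3 ≤ k d0 := by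
    obtain ⟨t, ht, ht0, htd⟩ := hg.2.2 d0 hused0'
    have hla : ℓ (vat v t) = (d0, false) := by
      rw [Prod.ext_iff]
      exact ⟨htd, hg.1 t ht ht0⟩
    have h1 : vc v 1 d0 ≤ vc v t d0 := vc_mono hv (by omega) d0
    have h2 : vc v t d0 ≤ vc v 0 d0 + 1 := (vc_between hv _ d0).2
    have h4 : vc v t d0 ≠ k d0 - 1 := fun h => htop (vat v t) d0 h hla
    have h5 : vc v t d0 < k d0 := (vat v t d0).isLt
    omega
  have hwapp : ∀ d, (wApp v d : ℕ) = vc v (p + 1) d + vc v 1 d - vc v 0 d := by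
    intro d
    show min (vc v (p + 1) d + vc v 1 d - vc v 0 d) (k d - 1) = _
    by_cases hd : d = d0
    · have e1 : vc v 1 d = vc v 0 d + 1 := by rw [hd]; exact hd0a
      have e2 : vc v (p + 1) d = vc v 0 d + 1 := by rw [hd]; exact hused0'
      have e3 : vc v 0 d + 3 ≤ k d := by rw [hd]; exact hbound
      rw [Nat.min_eq_left (by omega)]
    · have h1 := hd0b d hd
      have h2 : vc v (p + 1) d < k d := (vat v (p + 1) d).isLt
      rw [Nat.min_eq_left (by omega)]
  have hvcA : ∀ t, t ≤ p → ∀ d, vc (appChain v) t d = vc v (t + 1) d := by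
    intro t ht d
    unfold vc
    rw [vat_appChain v ht]
  have hvcA0 : ∀ d, vc (appChain v) 0 d = vc v 1 d := fun d => hvcA 0 (by omega) d
  have hvcAl : ∀ d, vc (appChain v) (p + 1) d = (wApp v d : ℕ) := by
    intro d
    unfold vc
    rw [vat_appChain_last v rfl]
  have hchA : IsChain (appChain v) := by
    refine ⟨?_, ?_, ?_⟩
    · intro t ht
      by_cases htp : t < p
      · obtain ⟨e, he1, he2⟩ := hv.1 (t + 1) (by omega)
        refine ⟨e, ?_, fun e' hne => ?_⟩
        · rw [hvcA (t + 1) (by omega) e, hvcA t (by omega) e]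
          exact he1
        · rw [hvcA (t + 1) (by omega) e', hvcA t (by omega) e']
          exact he2 e' hne
      · have htp' : t = p := by omega
        rw [htp']
        refine ⟨d0, ?_, fun e hne => ?_⟩
        · rw [hvcAl d0, hvcA p le_rfl d0, hwapp d0]
          omega
        · rw [hvcAl e, hvcA p le_rfl e, hwapp e]
          have := hd0b e hne
          have h2 : vc v (p + 1) e < k e := (vat v (p + 1) e).isLt
          have h3 : vc v 0 e ≤ vc v (p + 1) e := vc_mono hv (by omega) e
          omega
    · intro d
      rw [hvcAl d, hvcA0 d, hwapp d]
      by_cases hd : d = d0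
      · have e1 : vc v 1 d = vc v 0 d + 1 := by rw [hd]; exact hd0a
        have e2 : vc v (p + 1) d = vc v 0 d + 1 := by rw [hd]; exact hused0'
        omega
      · have h1 := hd0b d hd
        have h2 := hv.2.1 d
        have h3 : vc v 0 d ≤ vc v (p + 1) d := vc_mono hv (by omega) d
        omega
    · intro d h
      rw [hvcAl d, hvcA0 d, hwapp d] at h
      rw [hvcA0 d]
      by_cases hd : d = d0
      · have e1 : vc v 1 d = vc v 0 d + 1 := by rw [hd]; exact hd0a
        have e2 : vc v (p + 1) d = vc v 0 d + 1 := by rw [hd]; exact hused0'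
        omega
      · have h1 := hd0b d hd
        have h2 : vc v 0 d ≤ vc v (p + 1) d := vc_mono hv (by omega) d
        have h4 := hv.2.1 d
        have h5 : vc v (p + 1) d = vc v 0 d := by omega
        have := hv.2.2 d h5
        omega
  have husedA : ∀ d, used (appChain v) d ↔ used v d := by
    intro d
    unfold used
    rw [hvcAl d, hvcA0 d, hwapp d]
    by_cases hd : d = d0
    · have e1 : vc v 1 d = vc v 0 d + 1 := by rw [hd]; exact hd0a
      have e2 : vc v (p + 1) d = vc v 0 d + 1 := by rw [hd]; exact hused0'
      constructor <;> intro <;> omega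
    · have h1 := hd0b d hd
      have h2 := hv.2.1 d
      have h3 : vc v 0 d ≤ vc v (p + 1) d := vc_mono hv (by omega) d
      constructor <;> intro <;> omega
  have hgd : GoodDrop ℓ (appChain v) (p + 1) := by
    refine ⟨?_, ?_, ?_⟩
    · intro t ht htj
      have ht' : t ≤ p := by omega
      rw [vat_appChain v ht']
      exact hg.1 (t + 1) (by omega) (by omega)
    · intro t s ht hs htj hsj hts
      have ht' : t ≤ p := by omega
      have hs' : s ≤ p := by omega
      rw [vat_appChain v ht', vat_appChain v hs'] at hts
      have := hg.2.1 (t + 1) (s + 1) (by omega) (by omega) (by omega) (by omega) hts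
      omega
    · intro d hd
      obtain ⟨t, ht, ht0, htd⟩ := hg.2.2 d ((husedA d).1 hd)
      refine ⟨t - 1, by omega, by omega, ?_⟩
      rw [vat_appChain v (by omega), show t - 1 + 1 = t by omega]
      exact htd
  have hnb : ¬ BCond (appChain v) := by
    intro hb
    have h1 : vc (appChain v) (p + 1) d0 = vc (appChain v) p d0 + 1 := by
      rw [hvcAl d0, hvcA p le_rfl d0, hwapp d0]
      omega
    have h2 := hb d0 h1
    rw [hvcA0 d0] at h2
    omega
  have hpre : preChain (appChain v) = v := by
    funext t
    by_cases ht : (t : ℕ) = 0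
    · have h0 : preChain (appChain v) t = vat (preChain (appChain v)) (t : ℕ) :=
        (vat_eq _ t).symm
      rw [h0, ht, vat_preChain_zero, ← vat_eq v t, ht]
      funext d
      apply Fin.ext
      show vc (appChain v) 0 d -
          (vc (appChain v) (p + 1) d - vc (appChain v) p d) = vc v 0 d
      rw [hvcA0 d, hvcAl d, hvcA p le_rfl d, hwapp d]
      by_cases hd : d = d0
      · have e1 : vc v 1 d = vc v 0 d + 1 := by rw [hd]; exact hd0a
        have e2 : vc v (p + 1) d = vc v 0 d + 1 := by rw [hd]; exact hused0'
        omega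
      · have h1 := hd0b d hd
        have h2 := hv.2.1 d
        have h3 : vc v 0 d ≤ vc v (p + 1) d := vc_mono hv (by omega) d
        omega
    · have h0 : preChain (appChain v) t = vat (preChain (appChain v)) (t : ℕ) :=
        (vat_eq _ t).symm
      rw [h0, vat_preChain _ (by omega) (by omega), vat_appChain v (by omega),
        show (t : ℕ) - 1 + 1 = (t : ℕ) by omega, vat_eq]
  exact ⟨hchA, hgd, hnb, hpre⟩

lemma case_last {p : ℕ} {v : Fin (p + 2) → Pt k} (hv : IsChain v)
    (hg : GoodDrop ℓ v (p + 1)) (hnb : ¬ BCond v) :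
    IsChain (preChain v) ∧ GoodDrop ℓ (preChain v) 0 ∧
      appChain (preChain v) = v := by
  obtain ⟨dl, hdla, hdlb⟩ := hv.1 p (by omega)
  have h0dl : 1 ≤ vc v 0 dl := by
    unfold BCond at hnb
    push_neg at hnb
    obtain ⟨d1, hd1a, hd1b⟩ := hnb
    have : d1 = dl := by
      by_contra h
      have := hdlb d1 h
      omega
    rw [← this]
    omega
  have hpdl : vc v p dl = vc v 0 dl := by
    have h1 := hv.2.1 dl
    have h2 : vc v 0 dl ≤ vc v p dl := vc_mono hv (by omega) dl
    omega
  have hwpre : ∀ d, (wPre v d : ℕ) = vc v 0 d - (vc v (p + 1) d - vc v p d) := fun d => rfl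
  have hvcP : ∀ t, 1 ≤ t → t ≤ p + 1 → ∀ d, vc (preChain v) t d = vc v (t - 1) d := by
    intro t ht ht2 d
    unfold vc
    rw [vat_preChain v ht ht2]
  have hvcP0 : ∀ d, vc (preChain v) 0 d = (wPre v d : ℕ) := by
    intro d
    unfold vc
    rw [vat_preChain_zero v]
  have hvcP1 : ∀ d, vc (preChain v) 1 d = vc v 0 d := fun d => hvcP 1 le_rfl (by omega) d
  have hvcPl : ∀ d, vc (preChain v) (p + 1) d = vc v p d := by
    intro d
    rw [hvcP (p + 1) (by omega) le_rfl d, show p + 1 - 1 = p by omega]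
  have hchP : IsChain (preChain v) := by
    refine ⟨?_, ?_, ?_⟩
    · intro t ht
      by_cases ht0 : t = 0
      · rw [ht0]
        refine ⟨dl, ?_, fun e hne => ?_⟩
        · show vc (preChain v) 1 dl = vc (preChain v) 0 dl + 1
          rw [hvcP1 dl, hvcP0 dl, hwpre dl]
          omega
        · show vc (preChain v) 1 e = vc (preChain v) 0 e
          rw [hvcP1 e, hvcP0 e, hwpre e]
          have := hdlb e hne
          omega
      · obtain ⟨e, he1, he2⟩ := hv.1 (t - 1) (by omega)
        have he1' : vc v t e = vc v (t - 1) e + 1 := by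
          rwa [show t - 1 + 1 = t by omega] at he1
        refine ⟨e, ?_, fun e' hne => ?_⟩
        · rw [hvcP (t + 1) (by omega) (by omega) e, show t + 1 - 1 = t by omega,
            hvcP t (by omega) (by omega) e]
          exact he1'
        · have he2' : vc v t e' = vc v (t - 1) e' := by
            rw [← show t - 1 + 1 = t by omega]
            exact he2 e' hne
          rw [hvcP (t + 1) (by omega) (by omega) e', show t + 1 - 1 = t by omega,
            hvcP t (by omega) (by omega) e']
          exact he2'
    · intro d
      rw [hvcPl d, hvcP0 d, hwpre d]
      by_cases hd : d = dl
      · have e1 : vc v p d = vc v 0 d := by rw [hd]; exact hpdl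
        have e2 : vc v (p + 1) d = vc v p d + 1 := by rw [hd]; exact hdla
        omega
      · have h1 := hdlb d hd
        have h2 := hv.2.1 d
        have h3 : vc v 0 d ≤ vc v p d := vc_mono hv (by omega) d
        omega
    · intro d h
      rw [hvcPl d, hvcP0 d, hwpre d] at h
      rw [hvcP0 d, hwpre d]
      by_cases hd : d = dl
      · have e1 : vc v p d = vc v 0 d := by rw [hd]; exact hpdl
        have e2 : vc v (p + 1) d = vc v p d + 1 := by rw [hd]; exact hdla
        have e3 : 1 ≤ vc v 0 d := by rw [hd]; exact h0dl
        omega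
      · have h1 := hdlb d hd
        have h2 : vc v 0 d ≤ vc v p d := vc_mono hv (by omega) d
        have h5 : vc v (p + 1) d = vc v 0 d := by omega
        have := hv.2.2 d h5
        omega
  have husedP : ∀ d, used (preChain v) d ↔ used v d := by
    intro d
    unfold used
    rw [hvcPl d, hvcP0 d, hwpre d]
    by_cases hd : d = dl
    · have e1 : vc v p d = vc v 0 d := by rw [hd]; exact hpdl
      have e2 : vc v (p + 1) d = vc v p d + 1 := by rw [hd]; exact hdla
      have e3 : 1 ≤ vc v 0 d := by rw [hd]; exact h0dl
      constructor <;> intro <;> omega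
    · have h1 := hdlb d hd
      have h2 : vc v 0 d ≤ vc v p d := vc_mono hv (by omega) d
      constructor <;> intro <;> omega
  have hgd : GoodDrop ℓ (preChain v) 0 := by
    refine ⟨?_, ?_, ?_⟩
    · intro t ht htj
      rw [vat_preChain v (by omega) (by omega)]
      exact hg.1 (t - 1) (by omega) (by omega)
    · intro t s ht hs htj hsj hts
      rw [vat_preChain v (by omega) (by omega),
        vat_preChain v (by omega) (by omega)] at hts
      have := hg.2.1 (t - 1) (s - 1) (by omega) (by omega) (by omega) (by omega) hts
      omega
    · intro d hd
      obtain ⟨t, ht, ht0, htd⟩ := hg.2.2 d ((husedP d).1 hd)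
      refine ⟨t + 1, by omega, by omega, ?_⟩
      rw [vat_preChain v (by omega) (by omega), show t + 1 - 1 = t by omega]
      exact htd
  have happ : appChain (preChain v) = v := by
    funext t
    by_cases ht : (t : ℕ) = p + 1
    · have h0 : appChain (preChain v) t = vat (appChain (preChain v)) (t : ℕ) :=
        (vat_eq _ t).symm
      rw [h0, ht, vat_appChain_last _ rfl, ← vat_eq v t, ht]
      funext d
      apply Fin.ext
      show min (vc (preChain v) (p + 1) d + vc (preChain v) 1 d - vc (preChain v) 0 d)
          (k d - 1) = vc v (p + 1) d
      rw [hvcPl d, hvcP1 d, hvcP0 d, hwpre d]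
      have hlt : vc v (p + 1) d < k d := (vat v (p + 1) d).isLt
      by_cases hd : d = dl
      · have e1 : vc v p d = vc v 0 d := by rw [hd]; exact hpdl
        have e2 : vc v (p + 1) d = vc v p d + 1 := by rw [hd]; exact hdla
        have e3 : 1 ≤ vc v 0 d := by rw [hd]; exact h0dl
        rw [Nat.min_eq_left (by omega)]
        omega
      · have h1 := hdlb d hd
        have h2 : vc v 0 d ≤ vc v p d := vc_mono hv (by omega) d
        rw [Nat.min_eq_left (by omega)]
        omega
    · have h0 : appChain (preChain v) t = vat (appChain (preChain v)) (t : ℕ) :=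
        (vat_eq _ t).symm
      rw [h0, vat_appChain _ (by omega), vat_preChain v (by omega) (by omega),
        show (t : ℕ) + 1 - 1 = (t : ℕ) by omega, vat_eq]
  exact ⟨hchP, hgd, happ⟩

lemma case_mid {p : ℕ} {v : Fin (p + 2) → Pt k} (hv : IsChain v) {j : ℕ}
    (hj1 : 1 ≤ j) (hj2 : j ≤ p) (hg : GoodDrop ℓ v j) :
    IsChain (midChain v j) ∧ GoodDrop ℓ (midChain v j) j ∧
      midChain (midChain v j) j = v ∧ midChain v j ≠ v := by
  obtain ⟨a1, h1a0, h1b0⟩ := hv.1 (j - 1) (by omega)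
  have h1a : vc v j a1 = vc v (j - 1) a1 + 1 := by
    rwa [show j - 1 + 1 = j by omega] at h1a0
  have h1b : ∀ e : Fin n, e ≠ a1 → vc v j e = vc v (j - 1) e := by
    intro e he
    rw [← show j - 1 + 1 = j by omega]
    exact h1b0 e he
  clear h1a0 h1b0
  obtain ⟨a2, h2a, h2b⟩ := hv.1 j (by omega)
  have hne12 : a1 ≠ a2 := by
    intro h
    have hb1 : vc v 0 a1 ≤ vc v (j - 1) a1 := vc_mono hv (by omega) a1
    have hb2 : vc v (j + 1) a1 ≤ vc v 0 a1 + 1 := (vc_between hv _ a1).2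
    rw [← h] at h2a
    omega
  have hwmid : ∀ d, (wMid v j d : ℕ) = vc v (j - 1) d + vc v (j + 1) d - vc v j d := by
    intro d
    show min (vc v (j - 1) d + vc v (j + 1) d - vc v j d) (k d - 1) = _
    have m1 : vc v (j - 1) d ≤ vc v j d := vc_mono hv (by omega) d
    have m2 : vc v j d ≤ vc v (j + 1) d := vc_mono hv (by omega) d
    have hlt : vc v (j + 1) d < k d := (vat v (j + 1) d).isLt
    rw [Nat.min_eq_left (by omega)]
  have hvcM : ∀ t, t ≠ j → t ≤ p + 1 → ∀ d, vc (midChain v j) t d = vc v t d := by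
    intro t ht ht2 d
    unfold vc
    rw [vat_midChain v ht ht2]
  have hvcMj : ∀ d, vc (midChain v j) j d = (wMid v j d : ℕ) := by
    intro d
    unfold vc
    rw [vat_midChain_self v (by omega)]
  -- step dir facts at e, for convenience
  have hstepd : ∀ d, (wMid v j d : ℕ) =
      vc v (j - 1) d + (if d = a2 then 1 else 0) := by
    intro d
    rw [hwmid d]
    by_cases hd2 : d = a2
    · have e2 : vc v (j + 1) d = vc v j d + 1 := by rw [hd2]; exact h2a
      by_cases hd1 : d = a1
      · exact absurd (hd1.symm.trans hd2) hne12
      · have e1 : vc v j d = vc v (j - 1) d := h1b d hd1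
        simp only [hd2, if_true]
        omega
    · have e2 : vc v (j + 1) d = vc v j d := h2b d hd2
      by_cases hd1 : d = a1
      · have e1 : vc v j d = vc v (j - 1) d + 1 := by rw [hd1]; exact h1a
        simp only [hd2, if_false]
        omega
      · have e1 : vc v j d = vc v (j - 1) d := h1b d hd1
        simp only [hd2, if_false]
        omega
  have hchM : IsChain (midChain v j) := by
    refine ⟨?_, ?_, ?_⟩
    · intro t ht
      by_cases htj1 : t = j - 1
      · refine ⟨a2, ?_, fun e hne => ?_⟩
        · rw [show t + 1 = j by omega, hvcMj a2, hvcM t (by omega) (by omega) a2,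
            hstepd a2, if_pos rfl, show t = j - 1 from htj1]
        · rw [show t + 1 = j by omega, hvcMj e, hvcM t (by omega) (by omega) e,
            hstepd e, if_neg hne, show t = j - 1 from htj1]
          omega
      · by_cases htj : t = j
        · refine ⟨a1, ?_, fun e hne => ?_⟩
          · rw [htj, hvcM (j + 1) (by omega) (by omega) a1, hvcMj a1, hstepd a1,
              if_neg hne12]
            have e2 : vc v (j + 1) a1 = vc v j a1 := h2b a1 hne12
            omega
          · rw [htj, hvcM (j + 1) (by omega) (by omega) e, hvcMj e, hstepd e]
            by_cases hd2 : e = a2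
            · have e2 : vc v (j + 1) e = vc v j e + 1 := by rw [hd2]; exact h2a
              have e1 : vc v j e = vc v (j - 1) e := h1b e hne
              rw [if_pos hd2]
              omega
            · have e2 : vc v (j + 1) e = vc v j e := h2b e hd2
              have e1 : vc v j e = vc v (j - 1) e := h1b e hne
              rw [if_neg hd2]
              omega
        · obtain ⟨e, he1, he2⟩ := hv.1 t ht
          refine ⟨e, ?_, fun e' hne => ?_⟩
          · rw [hvcM (t + 1) (by omega) (by omega) e, hvcM t (by omega) (by omega) e]
            exact he1
          · rw [hvcM (t + 1) (by omega) (by omega) e', hvcM t (by omega) (by omega) e']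
            exact he2 e' hne
    · intro d
      rw [hvcM (p + 1) (by omega) (by omega) d, hvcM 0 (by omega) (by omega) d]
      exact hv.2.1 d
    · intro d h
      rw [hvcM (p + 1) (by omega) (by omega) d, hvcM 0 (by omega) (by omega) d] at h
      rw [hvcM 0 (by omega) (by omega) d]
      exact hv.2.2 d h
  have husedM : ∀ d, used (midChain v j) d ↔ used v d := by
    intro d
    unfold used
    rw [hvcM (p + 1) (by omega) (by omega) d, hvcM 0 (by omega) (by omega) d]
  have hgd : GoodDrop ℓ (midChain v j) j := by
    refine ⟨?_, ?_, ?_⟩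
    · intro t ht htj
      rw [vat_midChain v htj ht]
      exact hg.1 t ht htj
    · intro t s ht hs htj hsj hts
      rw [vat_midChain v htj ht, vat_midChain v hsj hs] at hts
      exact hg.2.1 t s ht hs htj hsj hts
    · intro d hd
      obtain ⟨t, ht, ht0, htd⟩ := hg.2.2 d ((husedM d).1 hd)
      refine ⟨t, ht, ht0, ?_⟩
      rw [vat_midChain v ht0 ht]
      exact htd
  have hmm : midChain (midChain v j) j = v := by
    funext t
    by_cases ht : (t : ℕ) = j
    · have h0 : midChain (midChain v j) j t = vat (midChain (midChain v j) j) (t : ℕ) :=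
        (vat_eq _ t).symm
      rw [h0, ht, vat_midChain_self _ (by omega), ← vat_eq v t, ht]
      funext d
      apply Fin.ext
      show min (vc (midChain v j) (j - 1) d + vc (midChain v j) (j + 1) d -
          vc (midChain v j) j d) (k d - 1) = vc v j d
      rw [hvcM (j - 1) (by omega) (by omega) d, hvcM (j + 1) (by omega) (by omega) d,
        hvcMj d, hstepd d]
      have m1 : vc v (j - 1) d ≤ vc v j d := vc_mono hv (by omega) d
      have m2 : vc v j d ≤ vc v (j + 1) d := vc_mono hv (by omega) d
      have hlt : vc v j d < k d := (vat v j d).isLt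
      by_cases hd2 : d = a2
      · have e2 : vc v (j + 1) d = vc v j d + 1 := by rw [hd2]; exact h2a
        have e1 : vc v j d = vc v (j - 1) d := h1b d (by rw [hd2]; exact fun h => hne12 h.symm)
        rw [if_pos hd2, Nat.min_eq_left (by omega)]
        omega
      · have e2 : vc v (j + 1) d = vc v j d := h2b d hd2
        rw [if_neg hd2, Nat.min_eq_left (by omega)]
        by_cases hd1 : d = a1
        · have e1 : vc v j d = vc v (j - 1) d + 1 := by rw [hd1]; exact h1a
          omega
        · have e1 : vc v j d = vc v (j - 1) d := h1b d hd1
          omega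
    · have h0 : midChain (midChain v j) j t = vat (midChain (midChain v j) j) (t : ℕ) :=
        (vat_eq _ t).symm
      rw [h0, vat_midChain _ ht (by omega), vat_midChain v ht (by omega), vat_eq]
  have hmne : midChain v j ≠ v := by
    intro h
    have h1 : vc (midChain v j) j a2 = vc v j a2 := by rw [h]
    rw [hvcMj a2, hstepd a2, if_pos rfl] at h1
    have e1 : vc v j a2 = vc v (j - 1) a2 := h1b a2 (fun h => hne12 h.symm)
    omega
  exact ⟨hchM, hgd, hmm, hmne⟩

include htop in
lemma phi_props {p : ℕ} (q : (Fin (p + 2) → Pt k) × Fin (p + 2)) (hq1 : IsChain q.1)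
    (hq2 : GoodDrop ℓ q.1 (q.2 : ℕ)) (hq3 : ¬ ((q.2 : ℕ) = p + 1 ∧ BCond q.1)) :
    (IsChain (phi q).1 ∧ GoodDrop ℓ (phi q).1 ((phi q).2 : ℕ)) ∧
      ¬ (((phi q).2 : ℕ) = p + 1 ∧ BCond (phi q).1) ∧ phi (phi q) = q ∧ phi q ≠ q := by
  obtain ⟨v, j⟩ := q
  simp only at hq1 hq2 hq3
  by_cases hj0 : (j : ℕ) = 0
  · have hphi : phi (v, j) = (appChain v, Fin.last (p + 1)) := by
      unfold phi
      simp only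
      rw [if_pos hj0]
    have hg0 : GoodDrop ℓ v 0 := by rwa [hj0] at hq2
    obtain ⟨hch, hgd, hnb, hpre⟩ := case_zero ℓ htop hq1 hg0
    rw [hphi]
    refine ⟨⟨hch, ?_⟩, ?_, ?_, ?_⟩
    · simp only [Fin.val_last]
      exact hgd
    · intro h
      exact hnb h.2
    · have hphi2 : phi (appChain v, Fin.last (p + 1)) = (preChain (appChain v), 0) := by
        unfold phi
        simp only [Fin.val_last, if_true]
        rw [if_neg hnb, if_neg (by omega : ¬ p + 1 = 0)]
      rw [hphi2, hpre]
      refine Prod.ext rfl (Fin.ext ?_)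
      simp only [Fin.val_zero]
      omega
    · intro h
      have := congrArg (fun x => (x.2 : ℕ)) h
      simp only [Fin.val_last] at this
      omega
  · by_cases hjl : (j : ℕ) = p + 1
    · have hnb : ¬ BCond v := fun hb => hq3 ⟨hjl, hb⟩
      have hphi : phi (v, j) = (preChain v, 0) := by
        unfold phi
        simp only
        rw [if_neg hj0, if_pos hjl, if_neg hnb]
      have hgl : GoodDrop ℓ v (p + 1) := by rwa [hjl] at hq2
      obtain ⟨hch, hgd, happ⟩ := case_last ℓ hq1 hgl hnb
      rw [hphi]
      refine ⟨⟨hch, ?_⟩, ?_, ?_, ?_⟩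
      · simp only [Fin.val_zero]
        exact hgd
      · intro h
        simp only [Fin.val_zero] at h
        omega
      · have hphi2 : phi (preChain v, (0 : Fin (p + 2))) = (appChain (preChain v), Fin.last (p + 1)) := by
          unfold phi
          simp only [Fin.val_zero, if_true]
        rw [hphi2, happ]
        refine Prod.ext rfl (Fin.ext ?_)
        simp only [Fin.val_last]
        omega
      · intro h
        have := congrArg (fun x => (x.2 : ℕ)) h
        simp only [Fin.val_zero] at this
        omega
    · have hphi : phi (v, j) = (midChain v (j : ℕ), j) := by
        unfold phi
        simp only
        rw [if_neg hj0, if_neg hjl]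
      obtain ⟨hch, hgd, hmm, hmne⟩ := case_mid ℓ hq1 (by omega : 1 ≤ (j : ℕ))
        (by omega : (j : ℕ) ≤ p) hq2
      rw [hphi]
      refine ⟨⟨hch, hgd⟩, fun h => hjl h.1, ?_, ?_⟩
      · have hphi2 : phi (midChain v (j : ℕ), j) = (midChain (midChain v (j : ℕ)) (j : ℕ), j) := by
          unfold phi
          simp only
          rw [if_neg hj0, if_neg hjl]
        rw [hphi2, hmm]
      · intro h
        exact hmne (congrArg Prod.fst h)

include htop in
lemma step2 {p : ℕ} :
    (((univ.filter fun q : (Fin (p + 2) → Pt k) × Fin (p + 2) =>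
        IsChain q.1 ∧ GoodDrop ℓ q.1 (q.2 : ℕ)).card : ℕ) : ZMod 2) =
    ((((univ.filter fun q : (Fin (p + 2) → Pt k) × Fin (p + 2) =>
        IsChain q.1 ∧ GoodDrop ℓ q.1 (q.2 : ℕ)).filter
        fun q => (q.2 : ℕ) = p + 1 ∧ BCond q.1).card : ℕ) : ZMod 2) := by
  set I := univ.filter fun q : (Fin (p + 2) → Pt k) × Fin (p + 2) =>
      IsChain q.1 ∧ GoodDrop ℓ q.1 (q.2 : ℕ) with hI
  have hmemI : ∀ q, q ∈ I ↔ IsChain q.1 ∧ GoodDrop ℓ q.1 (q.2 : ℕ) := by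
    intro q
    simp only [hI, mem_filter, mem_univ, true_and]
  have hsplit := card_filter_add_card_filter_not
    (s := I) (p := fun q => (q.2 : ℕ) = p + 1 ∧ BCond q.1)
  have hzero : ((I.filter fun q => ¬ ((q.2 : ℕ) = p + 1 ∧ BCond q.1)).card : ZMod 2) = 0 := by
    have hsum : (∑ _q ∈ I.filter fun q => ¬ ((q.2 : ℕ) = p + 1 ∧ BCond q.1), (1 : ZMod 2)) = 0 := by
      apply sum_involution (g := fun q _ => phi q)
      · intro q hq
        decide
      · intro q hq _
        simp only [mem_filter] at hq
        obtain ⟨hqI, hqn⟩ := hq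
        rw [hmemI q] at hqI
        exact (phi_props ℓ htop q hqI.1 hqI.2 hqn).2.2.2
      · intro q hq
        simp only [mem_filter] at hq ⊢
        obtain ⟨hqI, hqn⟩ := hq
        rw [hmemI q] at hqI
        obtain ⟨h1, h2, _, _⟩ := phi_props ℓ htop q hqI.1 hqI.2 hqn
        exact ⟨(hmemI _).2 h1, h2⟩
      · intro q hq
        simp only [mem_filter] at hq
        obtain ⟨hqI, hqn⟩ := hq
        rw [hmemI q] at hqI
        exact (phi_props ℓ htop q hqI.1 hqI.2 hqn).2.2.1
    rwa [sum_const, nsmul_eq_mul, mul_one] at hsum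
  have : (I.card : ZMod 2) =
      ((I.filter fun q => (q.2 : ℕ) = p + 1 ∧ BCond q.1).card : ZMod 2) := by
    rw [← hsplit]
    push_cast
    rw [hzero]
    ring
  exact this

/-- restriction of a chain of `p+1` steps to its first `p+1` vertices. -/
def resChain {p : ℕ} (v : Fin (p + 2) → Pt k) : Fin (p + 1) → Pt k :=
  fun t => v t.castSucc

lemma vat_res {p : ℕ} (v : Fin (p + 2) → Pt k) {t : ℕ} (ht : t ≤ p) :
    vat (resChain v) t = vat v t := by
  show v (Fin.castSucc ⟨min t p, by omega⟩) = v ⟨min t (p + 1), by omega⟩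
  refine congrArg v (Fin.ext ?_)
  show min t p = min t (p + 1)
  rw [Nat.min_eq_left ht, Nat.min_eq_left (by omega)]

lemma vc_res {p : ℕ} (v : Fin (p + 2) → Pt k) {t : ℕ} (ht : t ≤ p) (d : Fin n) :
    vc (resChain v) t d = vc v t d := by
  unfold vc
  rw [vat_res v ht]

lemma used_iff_dir {p : ℕ} {v : Fin (p + 2) → Pt k} (hv : IsChain v)
    (hg : GoodDrop ℓ v (p + 1)) (d : Fin n) :
    used v d ↔ ∃ t, t ≤ p ∧ (ℓ (vat v t)).1 = d := by
  constructor
  · intro hd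
    obtain ⟨t, ht, htn, htd⟩ := hg.2.2 d hd
    exact ⟨t, by omega, htd⟩
  · rintro ⟨t, ht, htd⟩
    set F : Fin (p + 1) → Fin n := fun a => (ℓ (vat v (a : ℕ))).1 with hF
    have hFinj : Function.Injective F := by
      intro a b hab
      exact Fin.ext (hg.2.1 (a : ℕ) (b : ℕ) (by omega) (by omega) (by omega) (by omega) hab)
    have hSsub : (univ.filter fun d : Fin n => used v d) ⊆ univ.image F := by
      intro d' hd'
      obtain ⟨t', ht', htn', htd'⟩ := hg.2.2 d' ((mem_filter.1 hd').2)
      refine mem_image.2 ⟨⟨t', by omega⟩, mem_univ _, ?_⟩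
      exact htd'
    have hEq : (univ.filter fun d : Fin n => used v d) = univ.image F := by
      refine Finset.eq_of_subset_of_card_le hSsub ?_
      rw [card_image_of_injective _ hFinj, card_univ, Fintype.card_fin, used_card hv]
    have : d ∈ univ.image F := by
      refine mem_image.2 ⟨⟨t, by omega⟩, mem_univ _, ?_⟩
      exact htd
    rw [← hEq] at this
    exact (mem_filter.1 this).2

variable (hk2 : ∀ i : Fin n, 2 ≤ k i)

include hk2 in
lemma step3 {p : ℕ} :
    ((univ.filter fun q : (Fin (p + 2) → Pt k) × Fin (p + 2) =>
        IsChain q.1 ∧ GoodDrop ℓ q.1 (q.2 : ℕ)).filter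
        fun q => (q.2 : ℕ) = p + 1 ∧ BCond q.1).card = psiCount ℓ p := by
  unfold psiCount
  apply card_bij (i := fun q _ => resChain q.1)
  · -- maps into
    rintro ⟨v, j⟩ hq
    simp only [mem_filter, mem_univ, true_and] at hq ⊢
    obtain ⟨⟨hch, hgd0⟩, hjl, hbc⟩ := hq
    rw [hjl] at hgd0
    obtain ⟨dl, hdla, hdlb⟩ := hch.1 p (by omega)
    constructor
    · refine ⟨?_, ?_, ?_⟩
      · intro t ht
        obtain ⟨e, he1, he2⟩ := hch.1 t (by omega)
        refine ⟨e, ?_, fun e' hne => ?_⟩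
        · rw [vc_res v (by omega), vc_res v (by omega)]
          exact he1
        · rw [vc_res v (by omega), vc_res v (by omega)]
          exact he2 e' hne
      · intro d
        rw [vc_res v (by omega), vc_res v (by omega)]
        have h1 : vc v p d ≤ vc v (p + 1) d := vc_mono hch (by omega) d
        have h2 := hch.2.1 d
        omega
      · intro d h
        rw [vc_res v (by omega), vc_res v (by omega)] at h
        rw [vc_res v (by omega)]
        by_cases hd : d = dl
        · rw [hd]
          exact hbc dl (by rw [← hd] at hdla ⊢; exact hdla)
        · have h1 := hdlb d hd
          exact hch.2.2 d (by omega)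
    · refine ⟨?_, ?_, ?_⟩
      · intro t ht
        rw [vat_res v (by omega)]
        exact hgd0.1 t (by omega) (by omega)
      · intro t s ht hs hts
        rw [vat_res v (by omega), vat_res v (by omega)] at hts
        exact hgd0.2.1 t s (by omega) (by omega) (by omega) (by omega) hts
      · intro d hd
        have hdused : used v d := by
          unfold used at hd ⊢
          rw [vc_res v (by omega), vc_res v (by omega)] at hd
          have h1 : vc v p d ≤ vc v (p + 1) d := vc_mono hch (by omega) d
          have h2 := hch.2.1 d
          omega
        obtain ⟨t, ht, htn, htd⟩ := hgd0.2.2 d hdused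
        refine ⟨t, by omega, ?_⟩
        rw [vat_res v (by omega)]
        exact htd
  · -- injective
    rintro ⟨v, j⟩ hq ⟨v', j'⟩ hq' heq
    simp only [mem_filter, mem_univ, true_and] at hq hq'
    obtain ⟨⟨hch, hgd0⟩, hjl, hbc⟩ := hq
    obtain ⟨⟨hch', hgd0'⟩, hjl', hbc'⟩ := hq'
    rw [hjl] at hgd0
    rw [hjl'] at hgd0'
    have hjj : j = j' := Fin.ext (by omega)
    have hvat : ∀ t, t ≤ p → vat v t = vat v' t := by
      intro t ht
      rw [← vat_res v ht, ← vat_res v' ht, heq]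
    have hused : ∀ d, used v d ↔ used v' d := by
      intro d
      rw [used_iff_dir ℓ hch hgd0 d, used_iff_dir ℓ hch' hgd0' d]
      constructor
      · rintro ⟨t, ht, htd⟩
        exact ⟨t, ht, by rw [← hvat t ht]; exact htd⟩
      · rintro ⟨t, ht, htd⟩
        exact ⟨t, ht, by rw [hvat t ht]; exact htd⟩
    have hvv : v = v' := by
      funext t
      by_cases ht : (t : ℕ) ≤ p
      · have := hvat (t : ℕ) ht
        rwa [vat_eq, vat_eq] at this
      · have htl : (t : ℕ) = p + 1 := by omega
        funext d
        apply Fin.ext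
        have e0 : vc v 0 d = vc v' 0 d := by
          unfold vc
          rw [hvat 0 (by omega)]
        have hb1 := hch.2.1 d
        have hb2 := hch'.2.1 d
        have hm1 : vc v 0 d ≤ vc v (p + 1) d := vc_mono hch (by omega) d
        have hm2 : vc v' 0 d ≤ vc v' (p + 1) d := vc_mono hch' (by omega) d
        have hval : vc v (p + 1) d = vc v' (p + 1) d := by
          by_cases hu : used v d
          · have hu' : used v' d := (hused d).1 hu
            unfold used at hu hu'
            omega
          · have hu' : ¬ used v' d := fun h => hu ((hused d).2 h)
            unfold used at hu hu'
            omega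
        have hv1 : (v t d : ℕ) = vc v (p + 1) d := by
          unfold vc
          rw [← vat_eq v t, htl]
        have hv2 : (v' t d : ℕ) = vc v' (p + 1) d := by
          unfold vc
          rw [← vat_eq v' t, htl]
        omega
    rw [hvv, hjj]
  · -- surjective
    intro u hu
    simp only [mem_filter, mem_univ, true_and] at hu
    obtain ⟨hch, hps⟩ := hu
    -- find the direction not used by u among the labels
    have hex : ∃ t0 : ℕ, t0 ≤ p ∧ ¬ used u ((ℓ (vat u t0)).1) := by
      by_contra h
      push_neg at h
      have hsub : univ.image (fun a : Fin (p + 1) => (ℓ (vat u (a : ℕ))).1) ⊆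
          univ.filter fun d : Fin n => used u d := by
        intro d hd
        obtain ⟨a, _, rfl⟩ := mem_image.1 hd
        exact mem_filter.2 ⟨mem_univ _, h (a : ℕ) (by omega)⟩
      have h1 := card_le_card hsub
      have h2 : (univ.image fun a : Fin (p + 1) => (ℓ (vat u (a : ℕ))).1).card = p + 1 := by
        rw [card_image_of_injective, card_univ, Fintype.card_fin]
        intro a b hab
        exact Fin.ext (hps.2.1 (a : ℕ) (b : ℕ) (by omega) (by omega) hab)
      rw [used_card hch] at h1
      omega
    obtain ⟨t0, ht0, hnu⟩ := hex
    set d0 := (ℓ (vat u t0)).1 with hd0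
    have hz : vc u p d0 = vc u 0 d0 := by
      have h1 : vc u 0 d0 ≤ vc u p d0 := vc_mono hch (by omega) d0
      have h2 := hch.2.1 d0
      unfold used at hnu
      omega
    have hz0 : vc u 0 d0 = 0 := hch.2.2 d0 hz
    have hlt : (1 : ℕ) < k d0 := by
      have := hk2 d0
      omega
    set w : Pt k := (fun d => if h : d = d0 then ⟨1, by rw [h]; exact hlt⟩ else vat u p d)
      with hw
    have hwval : ∀ d, (w d : ℕ) = vc u p d + (if d = d0 then 1 else 0) := by
      intro d
      rw [hw]
      by_cases hd : d = d0
      · simp only [hd, dif_pos, if_pos]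
        have : vc u p d0 = 0 := by omega
        omega
      · simp only [dif_neg hd, if_neg hd]
        rfl
    set v : Fin (p + 2) → Pt k :=
      (fun t => if h : (t : ℕ) ≤ p then u ⟨(t : ℕ), by omega⟩ else w) with hv
    have hvat : ∀ t, t ≤ p → vat v t = vat u t := by
      intro t ht
      show v ⟨min t (p + 1), by omega⟩ = vat u t
      rw [hv]
      simp only
      rw [dif_pos (show ((⟨min t (p + 1), by omega⟩ : Fin (p + 2)) : ℕ) ≤ p by
        show min t (p + 1) ≤ p
        omega)]
      unfold vat
      refine congrArg u (Fin.ext ?_)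
      show min t (p + 1) = min t p
      omega
    have hvatl : vat v (p + 1) = w := by
      show v ⟨min (p + 1) (p + 1), by omega⟩ = w
      rw [hv]
      simp only
      rw [dif_neg (show ¬ ((⟨min (p + 1) (p + 1), by omega⟩ : Fin (p + 2)) : ℕ) ≤ p by
        show ¬ min (p + 1) (p + 1) ≤ p
        omega)]
    have hvc : ∀ t, t ≤ p → ∀ d, vc v t d = vc u t d := by
      intro t ht d
      unfold vc
      rw [hvat t ht]
    have hvcl : ∀ d, vc v (p + 1) d = vc u p d + (if d = d0 then 1 else 0) := by
      intro d
      unfold vc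
      rw [hvatl, hwval d]
      rfl
    have hchv : IsChain v := by
      refine ⟨?_, ?_, ?_⟩
      · intro t ht
        by_cases htp : t < p
        · obtain ⟨e, he1, he2⟩ := hch.1 t htp
          refine ⟨e, ?_, fun e' hne => ?_⟩
          · rw [hvc (t + 1) (by omega), hvc t (by omega)]
            exact he1
          · rw [hvc (t + 1) (by omega), hvc t (by omega)]
            exact he2 e' hne
        · have htp' : t = p := by omega
          rw [htp']
          refine ⟨d0, ?_, fun e hne => ?_⟩
          · rw [hvcl d0, hvc p le_rfl d0, if_pos rfl]
          · rw [hvcl e, hvc p le_rfl e, if_neg hne]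
            omega
      · intro d
        rw [hvcl d, hvc 0 (by omega) d]
        have h2 := hch.2.1 d
        by_cases hd : d = d0
        · have e1 : vc u p d = vc u 0 d := by rw [hd]; exact hz
          have e2 : vc u 0 d = 0 := by rw [hd]; exact hz0
          rw [if_pos hd]
          omega
        · rw [if_neg hd]
          omega
      · intro d h
        rw [hvcl d, hvc 0 (by omega) d] at h
        rw [hvc 0 (by omega) d]
        by_cases hd : d = d0
        · have e1 : vc u p d = vc u 0 d := by rw [hd]; exact hz
          have e2 : vc u 0 d = 0 := by rw [hd]; exact hz0
          rw [if_pos hd] at h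
          omega
        · rw [if_neg hd] at h
          exact hch.2.2 d (by omega)
    have husedv : ∀ d, used v d ↔ (used u d ∨ d = d0) := by
      intro d
      unfold used
      rw [hvcl d, hvc 0 (by omega) d]
      have h1 : vc u 0 d ≤ vc u p d := vc_mono hch (by omega) d
      have h2 := hch.2.1 d
      by_cases hd : d = d0
      · have e1 : vc u p d = vc u 0 d := by rw [hd]; exact hz
        rw [if_pos hd]
        constructor
        · intro
          right
          exact hd
        · intro
          omega
      · rw [if_neg hd]
        constructor
        · intro h
          left
          exact h
        · rintro (h | h)
          · exact h
          · exact absurd h hd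
    refine ⟨(v, Fin.last (p + 1)), ?_, ?_⟩
    · rw [mem_filter, mem_filter]
      refine ⟨⟨mem_univ _, hchv, ?_⟩, rfl, ?_⟩
      · show GoodDrop ℓ v (p + 1)
        refine ⟨?_, ?_, ?_⟩
        · intro t ht htj
          rw [hvat t (by omega)]
          exact hps.1 t (by omega)
        · intro t s ht hs htj hsj hts
          rw [hvat t (by omega), hvat s (by omega)] at hts
          exact hps.2.1 t s (by omega) (by omega) hts
        · intro d hd
          rcases (husedv d).1 hd with h | h
          · obtain ⟨t, ht, htd⟩ := hps.2.2 d h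
            refine ⟨t, by omega, by omega, ?_⟩
            rw [hvat t (by omega)]
            exact htd
          · refine ⟨t0, by omega, by omega, ?_⟩
            rw [hvat t0 (by omega), h]
      · show BCond v
        intro d hd
        rw [hvcl d, hvc p le_rfl d] at hd
        rw [hvc 0 (by omega) d]
        by_cases h : d = d0
        · rw [h]
          exact hz0
        · rw [if_neg h] at hd
          omega
    · funext t
      show v t.castSucc = u t
      rw [← vat_eq u t, ← hvat (t : ℕ) (by omega), ← vat_eq v t.castSucc]
      refine congrArg (vat v) ?_
      simp only [Fin.coe_castSucc]

include hbot hk2 in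
lemma psi_zero : psiCount ℓ 0 = 1 := by
  unfold psiCount
  set z : Fin 1 → Pt k := (fun _ => fun d => ⟨0, by have := hk2 d; omega⟩) with hz
  rw [card_eq_one]
  refine ⟨z, ?_⟩
  ext v
  simp only [mem_filter, mem_univ, true_and, mem_singleton]
  constructor
  · rintro ⟨hch, _⟩
    funext t d
    apply Fin.ext
    have h0 : (t : ℕ) = 0 := by omega
    have hsup := hch.2.2 d rfl
    have hval : (v t d : ℕ) = vc v 0 d := by
      unfold vc
      rw [← vat_eq v t, h0]
    show (v t d : ℕ) = (z t d : ℕ)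
    rw [hval, hsup]
  · rintro rfl
    constructor
    · refine ⟨?_, ?_, ?_⟩
      · intro t ht
        exact absurd ht (by omega)
      · intro d
        omega
      · intro d _
        rfl
    · refine ⟨?_, ?_, ?_⟩
      · intro t ht
        have ht0 : t = 0 := by omega
        rw [ht0]
        by_contra hb
        rw [Bool.not_eq_false] at hb
        exact hbot (vat z 0) (ℓ (vat z 0)).1 rfl (Prod.ext_iff.2 ⟨rfl, hb⟩)
      · intro t s ht hs _
        omega
      · intro d hd
        unfold used at hd
        omega

lemma psi_top : psiCount ℓ n = 0 := by
  unfold psiCount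
  rw [card_eq_zero]
  rw [eq_empty_iff_forall_notMem]
  intro v hv
  simp only [mem_filter, mem_univ, true_and] at hv
  obtain ⟨hch, hps⟩ := hv
  have hinj : Function.Injective (fun t : Fin (n + 1) => (ℓ (vat v (t : ℕ))).1) := by
    intro a b hab
    exact Fin.ext (hps.2.1 (a : ℕ) (b : ℕ) (by omega) (by omega) hab)
  have hcard := Fintype.card_le_of_injective _ hinj
  simp only [Fintype.card_fin] at hcard
  omega

include hbot htop hcomp hk2 in
theorem pm_false : False := by
  have hstep : ∀ p : ℕ, (psiCount ℓ (p + 1) : ZMod 2) = (psiCount ℓ p : ZMod 2) := by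
    intro p
    rw [← step1 ℓ hbot hcomp, step2 ℓ htop, step3 ℓ hk2]
  have hall : ∀ p : ℕ, (psiCount ℓ p : ZMod 2) = 1 := by
    intro p
    induction p with
    | zero =>
      rw [psi_zero ℓ hbot hk2]
      norm_num
    | succ p ih =>
      rw [hstep p]
      exact ih
  have h := hall n
  rw [psi_top ℓ] at h
  norm_num at h

end Label

section Reduction

/-- chains witnessing connectivity inside `F`. -/
def ChainP (F : Set (Pt k)) (x y : Pt k) : Prop :=
  ∃ m, ∃ c : Fin (m + 1) → Pt k, c 0 = x ∧ c (Fin.last m) = y ∧ (∀ j, c j ∈ F) ∧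
    ∀ j : Fin m, adj (c j.castSucc) (c j.succ)

lemma chainP_refl {F : Set (Pt k)} {x : Pt k} (hx : x ∈ F) : ChainP F x x :=
  ⟨0, fun _ => x, rfl, rfl, fun _ => hx, fun j => j.elim0⟩

def consC {m : ℕ} (x : Pt k) (c : Fin (m + 1) → Pt k) : Fin (m + 2) → Pt k :=
  fun t => if h : (t : ℕ) = 0 then x else c ⟨(t : ℕ) - 1, by omega⟩

lemma consC_apply {m : ℕ} (x : Pt k) (c : Fin (m + 1) → Pt k) (t : Fin (m + 2)) :
    consC x c t = if h : (t : ℕ) = 0 then x else c ⟨(t : ℕ) - 1, by omega⟩ := rfl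

lemma chainP_head {F : Set (Pt k)} {x y z : Pt k} (hadj : adj x y) (hx : x ∈ F)
    (h : ChainP F y z) : ChainP F x z := by
  obtain ⟨m, c, hc0, hcl, hmem, hstep⟩ := h
  refine ⟨m + 1, consC x c, ?_, ?_, ?_, ?_⟩
  · rw [consC_apply, dif_pos (Fin.val_zero _)]
  · rw [consC_apply, dif_neg (by simp only [Fin.val_last]; omega), ← hcl]
    refine congrArg c (Fin.ext ?_)
    simp only [Fin.val_last]
    omega
  · intro j
    rw [consC_apply]
    by_cases hj : (j : ℕ) = 0
    · rw [dif_pos hj]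
      exact hx
    · rw [dif_neg hj]
      exact hmem _
  · intro j
    rw [consC_apply, consC_apply]
    by_cases hj : (j : ℕ) = 0
    · have h1 : ((j.castSucc : Fin (m + 2)) : ℕ) = 0 := by
        simp only [Fin.coe_castSucc]
        exact hj
      have h2 : ((j.succ : Fin (m + 2)) : ℕ) = (j : ℕ) + 1 := by
        simp only [Fin.val_succ]
      rw [dif_pos h1, dif_neg (by omega)]
      have e0 : c ⟨((j.succ : Fin (m + 2)) : ℕ) - 1, by omega⟩ = y := by
        rw [← hc0]
        refine congrArg c (Fin.ext ?_)
        simp only [Fin.val_succ, Fin.val_zero]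
        omega
      rw [e0]
      exact hadj
    · have h1 : ((j.castSucc : Fin (m + 2)) : ℕ) = (j : ℕ) := by
        simp only [Fin.coe_castSucc]
      have h2 : ((j.succ : Fin (m + 2)) : ℕ) = (j : ℕ) + 1 := by
        simp only [Fin.val_succ]
      rw [dif_neg (by omega), dif_neg (by omega)]
      have hj1 : (j : ℕ) - 1 < m := by omega
      have hs := hstep ⟨(j : ℕ) - 1, hj1⟩
      have e1 : c ⟨((j.castSucc : Fin (m + 2)) : ℕ) - 1, by omega⟩ =
          c (Fin.castSucc ⟨(j : ℕ) - 1, hj1⟩) := by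
        refine congrArg c (Fin.ext ?_)
        simp only [Fin.coe_castSucc]
      have e2 : c ⟨((j.succ : Fin (m + 2)) : ℕ) - 1, by omega⟩ =
          c (Fin.succ ⟨(j : ℕ) - 1, hj1⟩) := by
        refine congrArg c (Fin.ext ?_)
        simp only [Fin.val_succ]
        omega
      rw [e1, e2]
      exact hs

lemma rtg_chain {F : Set (Pt k)} {x y : Pt k}
    (h : Relation.ReflTransGen (fun a b => a ∈ F ∧ b ∈ F ∧ adj a b) x y) (hx : x ∈ F) :
    ChainP F x y := by
  induction h using Relation.ReflTransGen.head_induction_on with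
  | refl => exact chainP_refl hx
  | head hab _ ih => exact chainP_head hab.2.2 hab.1 (ih hab.2.1)

end Reduction

end GaleHexProof

theorem gale_hex {n : ℕ} {k : Fin n → ℕ} (hk : ∀ i, 0 < k i)
    (𝓕 : Finset (Set (∀ i, Fin (k i)))) (hcard : 𝓕.card ≤ n)
    (hcov : ∀ x : ∀ i, Fin (k i), ∃ F ∈ 𝓕, x ∈ F) :
    ∃ F ∈ 𝓕, Connects F := by
  classical
  by_contra hcon
  push_neg at hcon
  by_cases hk1 : ∃ i, k i ≤ 1
  · obtain ⟨i, hi⟩ := hk1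
    obtain ⟨F, hF, hxF⟩ := hcov (fun j => ⟨0, hk j⟩)
    refine hcon F hF ⟨i, 0, fun _ => (fun j => ⟨0, hk j⟩), fun _ => hxF, rfl, ?_,
      fun j => j.elim0⟩
    show (0 : ℕ) = k i - 1
    have := hk i
    omega
  · push_neg at hk1
    have hk2 : ∀ i, 2 ≤ k i := fun i => by have := hk1 i; omega
    have hemb : Nonempty ({F // F ∈ 𝓕} ↪ Fin n) := by
      apply Function.Embedding.nonempty_of_card_le
      rw [Fintype.card_coe, Fintype.card_fin]
      exact hcard
    obtain ⟨ι⟩ := hemb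
    have hsel : ∀ x : GaleHexProof.Pt k, ∃ F, F ∈ 𝓕 ∧ x ∈ F := by
      intro x
      obtain ⟨F, h1, h2⟩ := hcov x
      exact ⟨F, h1, h2⟩
    choose Fs hFs hxFs using hsel
    set dix : GaleHexProof.Pt k → Fin n := fun x => ι ⟨Fs x, hFs x⟩ with hdix
    set Rp : GaleHexProof.Pt k → Prop := fun x =>
      ∃ y, Relation.ReflTransGen (fun a b => a ∈ Fs x ∧ b ∈ Fs x ∧ adj a b) x y ∧
        (y (dix x) : ℕ) = k (dix x) - 1 with hRp
    set lab : GaleHexProof.Pt k → Fin n × Bool :=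
      fun x => (dix x, if Rp x then true else false) with hlab
    refine GaleHexProof.pm_false lab ?_ ?_ ?_ hk2
    · -- hbot
      intro x i h0 heq
      have hdi : dix x = i := congrArg Prod.fst heq
      have hif : (if Rp x then true else false) = true := congrArg Prod.snd heq
      have hr : Rp x := by
        by_cases hr : Rp x
        · exact hr
        · rw [if_neg hr] at hif
          exact absurd hif (by decide)
      obtain ⟨y, hRT, hyt⟩ := hr
      obtain ⟨m, c, hc0, hcl, hmem, hstep⟩ := GaleHexProof.rtg_chain hRT (hxFs x)
      refine hcon (Fs x) (hFs x) ⟨dix x, m, c, hmem, ?_, ?_, hstep⟩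
      · rw [hc0, hdi]
        exact h0
      · rw [hcl]
        exact hyt
    · -- htop
      intro x i ht heq
      have hdi : dix x = i := congrArg Prod.fst heq
      have hif : (if Rp x then true else false) = false := congrArg Prod.snd heq
      have hnr : ¬ Rp x := by
        by_cases hr : Rp x
        · rw [if_pos hr] at hif
          exact absurd hif (by decide)
        · exact hr
      exact hnr ⟨x, Relation.ReflTransGen.refl, by rw [hdi]; exact ht⟩
    · -- hcomp
      intro x y i hadj heqx heqy
      have hdx : dix x = i := congrArg Prod.fst heqx
      have hdy : dix y = i := congrArg Prod.fst heqy
      have hifx : (if Rp x then true else false) = false := congrArg Prod.snd heqx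
      have hify : (if Rp y then true else false) = true := congrArg Prod.snd heqy
      have hnrx : ¬ Rp x := by
        by_cases hr : Rp x
        · rw [if_pos hr] at hifx
          exact absurd hifx (by decide)
        · exact hr
      have hry : Rp y := by
        by_cases hr : Rp y
        · exact hr
        · rw [if_neg hr] at hify
          exact absurd hify (by decide)
      have hFxy : Fs x = Fs y := by
        have h1 : (⟨Fs x, hFs x⟩ : {F // F ∈ 𝓕}) = ⟨Fs y, hFs y⟩ :=
          ι.injective (show dix x = dix y by rw [hdx, hdy])
        exact congrArg Subtype.val h1
      obtain ⟨z, hRT, hzt⟩ := hry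
      apply hnrx
      refine ⟨z, ?_, ?_⟩
      · rw [← hFxy] at hRT
        exact Relation.ReflTransGen.head ⟨hxFs x, by rw [hFxy]; exact hxFs y, hadj⟩ hRT
      · rw [hdx, ← hdy]
        exact hzt
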